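/- Let d ≥ 3 be an integer and let Γ be a symmetric numerical semigroup with exactly (d − 1)(d − 2)/2 gaps. For 0 ≤ l ≤ d − 3 set c_l := #{k ∈ Γ : k ≤ ld}. Then c_0 = 1, c_{d−3} = (d − 1)(d − 2)/2, and for every 0 ≤ l ≤ d − 3 one has c_l − (l + 1)(l + 2)/2 = c_{d−3−l} − (d − 1 − l)(d − 2 − l)/2; that is, the numbers n_l := c_l − (l+1)(l+2)/2 satisfy n_l = n_{d−3−l} and n_0 = n_{d−3} = 0. -/
import Mathlib

open Classical in
private lemma gamma_card_eq (Γ : Set ℕ) (δ : ℕ) (hδ1 : 1 ≤ δ)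
    (hsym : ∀ k : ℕ, k < 2 * δ → (k ∈ Γ ↔ (2 * δ - 1 - k) ∉ Γ))
    (m : ℕ) (hm : m ≤ 2 * δ - 1) :
    ((Finset.range (m + 1)).filter (· ∈ Γ)).card
      = ((Finset.Icc (2 * δ - 1 - m) (2 * δ - 1)).filter (· ∉ Γ)).card := by
  have himg : Finset.image (fun k => 2 * δ - 1 - k)
      ((Finset.range (m + 1)).filter (· ∈ Γ))
      = (Finset.Icc (2 * δ - 1 - m) (2 * δ - 1)).filter (· ∉ Γ) := by
    ext j
    simp only [Finset.mem_image, Finset.mem_filter, Finset.mem_range, Finset.mem_Icc,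
      Nat.lt_succ_iff]
    constructor
    · rintro ⟨k, ⟨hk, hkΓ⟩, rfl⟩
      refine ⟨⟨by omega, by omega⟩, (hsym k (by omega)).1 hkΓ⟩
    · rintro ⟨⟨hj1, hj2⟩, hjΓ⟩
      refine ⟨2 * δ - 1 - j, ⟨by omega, ?_⟩, by omega⟩
      have h2 : 2 * δ - 1 - j < 2 * δ := by omega
      have h := hsym (2 * δ - 1 - j) h2
      have hj' : 2 * δ - 1 - (2 * δ - 1 - j) = j := by omega
      rw [hj'] at h
      exact h.2 hjΓ
  rw [← himg, Finset.card_image_of_injOn]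
  intro a ha b hb hab
  simp only [Finset.mem_coe, Finset.mem_filter, Finset.mem_range, Nat.lt_succ_iff] at ha hb
  have hab' : 2 * δ - 1 - a = 2 * δ - 1 - b := hab
  omega

open Classical in
private lemma gamma_key (Γ : Set ℕ) (δ : ℕ) (hδ1 : 1 ≤ δ)
    (hsym : ∀ k : ℕ, k < 2 * δ → (k ∈ Γ ↔ (2 * δ - 1 - k) ∉ Γ))
    (m m' : ℕ) (hmm : m + m' = 2 * δ - 2) :
    ((Finset.range (m + 1)).filter (· ∈ Γ)).card + m' + 1
      = δ + ((Finset.range (m' + 1)).filter (· ∈ Γ)).card := by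
  -- full range count
  have hfull := gamma_card_eq Γ δ hδ1 hsym (2 * δ - 1) le_rfl
  have hr : 2 * δ - 1 + 1 = 2 * δ := by omega
  rw [hr] at hfull
  have hIcc0 : Finset.Icc (2 * δ - 1 - (2 * δ - 1)) (2 * δ - 1) = Finset.range (2 * δ) := by
    ext k; simp [Finset.mem_Icc, Finset.mem_range]; omega
  rw [hIcc0] at hfull
  have htot : ((Finset.range (2 * δ)).filter (· ∈ Γ)).card
      + ((Finset.range (2 * δ)).filter (· ∉ Γ)).card = 2 * δ := by
    have := Finset.card_filter_add_card_filter_not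
      (s := Finset.range (2 * δ)) (p := (· ∈ Γ))
    simpa using this
  -- gaps in full range = δ
  have hgaps : ((Finset.range (2 * δ)).filter (· ∉ Γ)).card = δ := by omega
  -- the lemma for m
  have hA := gamma_card_eq Γ δ hδ1 hsym m (by omega)
  have hidx : 2 * δ - 1 - m = m' + 1 := by omega
  rw [hidx] at hA
  -- split full range gaps
  have hsplit : Finset.range (2 * δ)
      = Finset.range (m' + 1) ∪ Finset.Icc (m' + 1) (2 * δ - 1) := by
    ext k; simp [Finset.mem_union, Finset.mem_Icc, Finset.mem_range]; omega
  have hdisj : Disjoint ((Finset.range (m' + 1)).filter (· ∉ Γ))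
      ((Finset.Icc (m' + 1) (2 * δ - 1)).filter (· ∉ Γ)) := by
    apply Finset.disjoint_filter_filter
    rw [Finset.disjoint_left]
    intro k hk hk'
    simp only [Finset.mem_range, Finset.mem_Icc] at hk hk'
    omega
  have hsum : ((Finset.range (m' + 1)).filter (· ∉ Γ)).card
      + ((Finset.Icc (m' + 1) (2 * δ - 1)).filter (· ∉ Γ)).card = δ := by
    rw [← Finset.card_union_of_disjoint hdisj, ← Finset.filter_union, ← hsplit, hgaps]
  have htot' : ((Finset.range (m' + 1)).filter (· ∈ Γ)).card
      + ((Finset.range (m' + 1)).filter (· ∉ Γ)).card = m' + 1 := by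
    have := Finset.card_filter_add_card_filter_not
      (s := Finset.range (m' + 1)) (p := (· ∈ Γ))
    simpa using this
  omega

/-- For a symmetric numerical semigroup `Γ` with exactly `(d−1)(d−2)/2` gaps,
the counting numbers `c_l = #{k ∈ Γ : k ≤ ld}` satisfy `c_0 = 1`,
`c_{d−3} = (d−1)(d−2)/2` and the symmetry
`c_l − (l+1)(l+2)/2 = c_{d−3−l} − (d−1−l)(d−2−l)/2` for `0 ≤ l ≤ d−3`. -/
theorem semigroup_count_symmetry (d : ℕ) (hd : 3 ≤ d)
    (Γ : Set ℕ) (h0 : 0 ∈ Γ) (hadd : ∀ a ∈ Γ, ∀ b ∈ Γ, a + b ∈ Γ)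
    (hfin : Γᶜ.Finite) (δ : ℕ) (hδ2 : 2 * δ = (d - 1) * (d - 2))
    (hδ : Γᶜ.ncard = δ)
    (hsym : ∀ k : ℕ, k < 2 * δ → (k ∈ Γ ↔ (2 * δ - 1 - k) ∉ Γ))
    (c : ℕ → ℕ) (hc : ∀ l : ℕ, c l = {k : ℕ | k ∈ Γ ∧ k ≤ l * d}.ncard) :
    c 0 = 1 ∧ c (d - 3) = (d - 1) * (d - 2) / 2 ∧
    ∀ l : ℕ, l ≤ d - 3 →
      (c l : ℤ) - ((l : ℤ) + 1) * ((l : ℤ) + 2) / 2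
        = (c (d - 3 - l) : ℤ)
          - ((d : ℤ) - 1 - (l : ℤ)) * ((d : ℤ) - 2 - (l : ℤ)) / 2 := by
  classical
  obtain ⟨e, rfl⟩ : ∃ e, d = e + 3 := ⟨d - 3, by omega⟩
  have hδ2' : 2 * δ = (e + 2) * (e + 1) := by
    have h1 : e + 3 - 1 = e + 2 := by omega
    have h2 : e + 3 - 2 = e + 1 := by omega
    rw [h1, h2] at hδ2; exact hδ2
  have hδ1 : 1 ≤ δ := by nlinarith
  have hm2 : e * (e + 3) + 2 = 2 * δ := by rw [hδ2']; ring
  have hc' : ∀ l : ℕ, c l = ((Finset.range (l * (e + 3) + 1)).filter (· ∈ Γ)).card := by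
    intro l
    rw [hc, ← Set.ncard_coe_finset]
    congr 1
    ext k
    simp [Nat.lt_succ_iff, and_comm]
  have hone : ∀ n : ℕ, ((Finset.range (0 * n + 1)).filter (· ∈ Γ)).card = 1 := by
    intro n
    simp [Finset.range_one, Finset.filter_singleton, h0]
  have hc0 : c 0 = 1 := by rw [hc' 0]; exact hone (e + 3)
  -- c (d-3) = δ
  have hkd := gamma_key Γ δ hδ1 hsym (e * (e + 3)) 0 (by omega)
  have hce : c e = δ := by
    rw [hc' e]
    have h1 : ((Finset.range (0 + 1)).filter (· ∈ Γ)).card = 1 := by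
      simpa using hone 1
    omega
  refine ⟨hc0, ?_, ?_⟩
  · have hidx : e + 3 - 3 = e := by omega
    rw [hidx, hce, show e + 3 - 1 = e + 2 from by omega,
      show e + 3 - 2 = e + 1 from by omega, ← hδ2']
    omega
  · intro l hl
    have hl' : l ≤ e := by omega
    have hidx : e + 3 - 3 - l = e - l := by omega
    rw [hidx]
    have hsum : l * (e + 3) + (e - l) * (e + 3) = 2 * δ - 2 := by
      rw [← Nat.add_mul]
      have h1 : l + (e - l) = e := by omega
      rw [h1]; omega
    have R := gamma_key Γ δ hδ1 hsym (l * (e + 3)) ((e - l) * (e + 3)) hsum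
    rw [← hc' l, ← hc' (e - l)] at R
    have RZ := congrArg (Nat.cast : ℕ → ℤ) R
    push_cast [Nat.cast_sub hl'] at RZ
    have δZ : 2 * (δ : ℤ) = ((e : ℤ) + 2) * ((e : ℤ) + 1) := by exact_mod_cast hδ2'
    have hkeyZ : 2 * (c l : ℤ) - ((l : ℤ) + 1) * ((l : ℤ) + 2)
        = 2 * (c (e - l) : ℤ)
          - (((e + 3 : ℕ) : ℤ) - 1 - (l : ℤ)) * (((e + 3 : ℕ) : ℤ) - 2 - (l : ℤ)) := by
      push_cast
      linear_combination 2 * RZ + δZ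
    obtain ⟨p, hp⟩ : ∃ p : ℤ, ((l : ℤ) + 1) * ((l : ℤ) + 2) = 2 * p := by
      rcases Int.even_mul_succ_self ((l : ℤ) + 1) with ⟨p, hp⟩
      exact ⟨p, by linear_combination hp⟩
    obtain ⟨q, hq⟩ : ∃ q : ℤ,
        (((e + 3 : ℕ) : ℤ) - 1 - (l : ℤ)) * (((e + 3 : ℕ) : ℤ) - 2 - (l : ℤ)) = 2 * q := by
      rcases Int.even_mul_succ_self (((e + 3 : ℕ) : ℤ) - 2 - (l : ℤ)) with ⟨q, hq⟩
      exact ⟨q, by linear_combination hq⟩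
    have e1 : ((l : ℤ) + 1) * ((l : ℤ) + 2) / 2 = p := by
      rw [hp, Int.mul_ediv_cancel_left _ two_ne_zero]
    have e2 : (((e + 3 : ℕ) : ℤ) - 1 - (l : ℤ)) * (((e + 3 : ℕ) : ℤ) - 2 - (l : ℤ)) / 2 = q := by
      rw [hq, Int.mul_ediv_cancel_left _ two_ne_zero]
    rw [e1, e2]
    rw [hp, hq] at hkeyZ
    linarith
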